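/- Let n ≥ 2 be even, k = n/2, and let b ∈ ℚ^n be such that for every k-element subset I of {1,...,n}, the sum Σ_{i∈I} b_i lies in {0, 1}. If Σ_{i∈I} b_i = 0 for some k-subset I and also Σ_{i∉I} b_i = 0 for the complementary subset, then b = 0. -/

import Mathlib

theorem stmt_14 (n : ℕ) (hn : 2 ≤ n) (hev : Even n) (k : ℕ) (hk : k = n / 2)
    (b : Fin n → ℚ)
    (hb : ∀ I : Finset (Fin n), I.card = k →
      ∑ i ∈ I, b i = 0 ∨ ∑ i ∈ I, b i = 1)
    (I : Finset (Fin n)) (hI : I.card = k)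
    (hI0 : ∑ i ∈ I, b i = 0) (hIc0 : ∑ i ∈ Iᶜ, b i = 0) :
    b = 0 := by
  obtain ⟨m, hm⟩ := hev
  have hkm : k = m := by omega
  have hk1 : 1 ≤ k := by omega
  have hIc : Iᶜ.card = k := by
    have := Finset.card_compl I
    simp [this, hI, Fintype.card_fin]
    omega
  -- key: for i ∈ I, j ∈ Iᶜ, b i = b j
  have key : ∀ i ∈ I, ∀ j ∈ Iᶜ, b i = b j := by
    intro i hi j hj
    have hjI : j ∉ I := Finset.mem_compl.mp hj
    have hiIc : i ∉ Iᶜ := by simp [hi]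
    -- set J = insert j (I.erase i)
    have hjmem : j ∉ I.erase i := fun h => hjI (Finset.mem_of_mem_erase h)
    have himem : i ∉ Iᶜ.erase j := fun h => hiIc (Finset.mem_of_mem_erase h)
    have hJcard : (insert j (I.erase i)).card = k := by
      rw [Finset.card_insert_of_notMem hjmem, Finset.card_erase_of_mem hi, hI]
      omega
    have hJ'card : (insert i (Iᶜ.erase j)).card = k := by
      rw [Finset.card_insert_of_notMem himem, Finset.card_erase_of_mem hj, hIc]
      omega
    have hsumJ : ∑ x ∈ insert j (I.erase i), b x = b j - b i := by
      rw [Finset.sum_insert hjmem, Finset.sum_erase_eq_sub hi, hI0]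
      ring
    have hsumJ' : ∑ x ∈ insert i (Iᶜ.erase j), b x = b i - b j := by
      rw [Finset.sum_insert himem, Finset.sum_erase_eq_sub hj, hIc0]
      ring
    have h1 := hb _ hJcard
    have h2 := hb _ hJ'card
    rw [hsumJ] at h1
    rw [hsumJ'] at h2
    rcases h1 with h1 | h1 <;> rcases h2 with h2 | h2 <;> linarith
  -- pick elements
  obtain ⟨i₀, hi₀⟩ := Finset.card_pos.mp (by rw [hI]; omega : 0 < I.card)
  obtain ⟨j₀, hj₀⟩ := Finset.card_pos.mp (by rw [hIc]; omega : 0 < Iᶜ.card)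
  have hall : ∀ x, b x = b i₀ := by
    intro x
    by_cases hx : x ∈ I
    · rw [key x hx j₀ hj₀, ← key i₀ hi₀ j₀ hj₀]
    · exact (key i₀ hi₀ x (Finset.mem_compl.mpr hx)).symm
  have hsum : ∑ i ∈ I, b i = (k : ℚ) * b i₀ := by
    rw [Finset.sum_congr rfl (fun x _ => hall x), Finset.sum_const, hI]
    simp [mul_comm]
  rw [hI0] at hsum
  have hb0 : b i₀ = 0 := by
    have hkq : (k : ℚ) ≠ 0 := by positivity
    field_simp at hsum
    exact (mul_eq_zero.mp hsum.symm).resolve_left hkq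
  funext x
  simp [hall x, hb0]
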